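/- Let (A, ≤) be a partially ordered set that has no descending chain and has an infinite antichain (a sequence (a_i)_{i∈ℕ} with a_i ≤ a_j implying i = j). Then (A, ≤) has a minimal bad sequence: a bad sequence (a_i)_{i∈ℕ} such that for every i ∈ ℕ and every b < a_i, every sequence starting with (a_0, a_1, …, a_{i−1}, b) is good. -/

import Mathlib

/-- A sequence is bad if no earlier term is `≤` a later term. -/
def NWBad {A : Type*} [PartialOrder A] (c : ℕ → A) : Prop :=
  ¬ ∃ i j : ℕ, i < j ∧ c i ≤ c j

/-- A list extends to a bad sequence. -/
def NWExt {A : Type*} [PartialOrder A] (l : List A) : Prop :=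
  ∃ c : ℕ → A, NWBad c ∧ ∀ k : ℕ, (hk : k < l.length) → c k = l.get ⟨k, hk⟩

theorem NWExt_step {A : Type*} [PartialOrder A] {l : List A} (h : NWExt l) :
    ∃ b : A, NWExt (l ++ [b]) := by
  obtain ⟨c, hc, hpre⟩ := h
  refine ⟨c l.length, c, hc, ?_⟩
  intro k hk
  simp only [List.length_append, List.length_singleton] at hk
  rcases lt_or_eq_of_le (Nat.lt_succ_iff.1 hk) with h' | h'
  · rw [hpre k h']
    simp [List.getElem_append, h']
  · subst h'
    simp

open Classical in
noncomputable def NWL {A : Type*} [PartialOrder A] [Nonempty A]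
    (wf : WellFounded ((· < ·) : A → A → Prop)) : ℕ → List A
  | 0 => []
  | n + 1 =>
    let l := NWL wf n
    l ++ [if h : ∃ b, NWExt (l ++ [b]) then
      wf.min {b | NWExt (l ++ [b])} ⟨h.choose, h.choose_spec⟩ else Classical.arbitrary A]

theorem NWL_length {A : Type*} [PartialOrder A] [Nonempty A]
    (wf : WellFounded ((· < ·) : A → A → Prop)) (n : ℕ) : (NWL wf n).length = n := by
  induction n with
  | zero => rfl
  | succ n ih => simp [NWL, ih]

theorem NWL_ext {A : Type*} [PartialOrder A] [Nonempty A]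
    (wf : WellFounded ((· < ·) : A → A → Prop)) (h0 : NWExt ([] : List A)) (n : ℕ) :
    NWExt (NWL wf n) := by
  induction n with
  | zero => exact h0
  | succ n ih =>
    have hb : ∃ b, NWExt (NWL wf n ++ [b]) := NWExt_step ih
    show NWExt (NWL wf n ++ [_])
    rw [dif_pos hb]
    exact wf.min_mem {b | NWExt (NWL wf n ++ [b])} ⟨hb.choose, hb.choose_spec⟩

noncomputable def aNW {A : Type*} [PartialOrder A] [Nonempty A]
    (wf : WellFounded ((· < ·) : A → A → Prop)) (n : ℕ) : A :=
  (NWL wf (n + 1)).get ⟨n, by rw [NWL_length]; exact n.lt_succ_self⟩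

theorem NWL_get {A : Type*} [PartialOrder A] [Nonempty A]
    (wf : WellFounded ((· < ·) : A → A → Prop)) (m k : ℕ) (hk : k < m)
    (h : k < (NWL wf m).length) : (NWL wf m).get ⟨k, h⟩ = aNW wf k := by
  induction m with
  | zero => omega
  | succ m ih =>
    rcases lt_or_eq_of_le (Nat.lt_succ_iff.1 hk) with h' | h'
    · have hlen : k < (NWL wf m).length := by rw [NWL_length]; exact h'
      have : (NWL wf (m+1)).get ⟨k, h⟩ = (NWL wf m).get ⟨k, hlen⟩ := by
        show (NWL wf m ++ [_]).get ⟨k, h⟩ = _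
        simp [List.getElem_append, hlen]
      rw [this, ih h' hlen]
    · subst h'
      rfl

theorem aNW_eq_min {A : Type*} [PartialOrder A] [Nonempty A]
    (wf : WellFounded ((· < ·) : A → A → Prop)) (n : ℕ)
    (hb : ∃ b, NWExt (NWL wf n ++ [b])) :
    aNW wf n = wf.min {b | NWExt (NWL wf n ++ [b])} ⟨hb.choose, hb.choose_spec⟩ := by
  have hlen : (NWL wf n).length = n := NWL_length wf n
  have key : ∀ (x : A) (h : n < (NWL wf n ++ [x]).length),
      (NWL wf n ++ [x]).get ⟨n, h⟩ = x := by
    intro x h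
    simp [List.getElem_append, hlen]
  show (NWL wf n ++ [_]).get ⟨n, _⟩ = _
  exact (key _ _).trans (dif_pos hb)

theorem stmt_10 (A : Type*) [PartialOrder A]
    (hdesc : ¬ ∃ a : ℕ → A, ∀ i : ℕ, a (i + 1) < a i)
    (hanti : ∃ a : ℕ → A, ∀ i j : ℕ, a i ≤ a j → i = j) :
    ∃ a : ℕ → A,
      (¬ ∃ i j : ℕ, i < j ∧ a i ≤ a j) ∧
      (∀ i : ℕ, ∀ b : A, b < a i →
        ∀ c : ℕ → A, (∀ k : ℕ, k < i → c k = a k) → c i = b →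
          ∃ p q : ℕ, p < q ∧ c p ≤ c q) := by
  obtain ⟨e, he⟩ := hanti
  have : Nonempty A := ⟨e 0⟩
  have wf : WellFounded ((· < ·) : A → A → Prop) := by
    rw [RelEmbedding.wellFounded_iff_isEmpty]
    exact ⟨fun f => hdesc ⟨fun i => f i, fun i => f.map_rel_iff.2 (Nat.lt_succ_self i)⟩⟩
  have h0 : NWExt ([] : List A) := by
    refine ⟨e, ?_, ?_⟩
    · rintro ⟨i, j, hij, hle⟩
      exact absurd (he i j hle) (Nat.ne_of_lt hij)
    · intro k hk
      exact absurd hk (Nat.not_lt_zero k)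
  refine ⟨aNW wf, ?_, ?_⟩
  · rintro ⟨i, j, hij, hle⟩
    obtain ⟨c, hc, hpre⟩ := NWL_ext wf h0 (j + 1)
    have hlen : (NWL wf (j + 1)).length = j + 1 := NWL_length wf (j + 1)
    have hi : c i = aNW wf i := by
      rw [hpre i (by omega), NWL_get wf (j + 1) i (by omega)]
    have hj : c j = aNW wf j := by
      rw [hpre j (by omega), NWL_get wf (j + 1) j (by omega)]
    exact hc ⟨i, j, hij, by rw [hi, hj]; exact hle⟩
  · intro i b hb c hcpre hci
    by_contra hgood
    have hleni : (NWL wf i).length = i := NWL_length wf i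
    have hmem : b ∈ {x | NWExt (NWL wf i ++ [x])} := by
      refine ⟨c, hgood, ?_⟩
      intro k hk
      have hk' : k < i + 1 := by
        simpa [hleni] using hk
      rcases lt_or_eq_of_le (Nat.lt_succ_iff.1 hk') with h' | h'
      · have hkl : k < (NWL wf i).length := by omega
        have : (NWL wf i ++ [b]).get ⟨k, hk⟩ = (NWL wf i).get ⟨k, hkl⟩ := by
          simp [List.getElem_append, hkl]
        rw [this, NWL_get wf i k h', hcpre k h']
      · subst h'
        have : (NWL wf k ++ [b]).get ⟨k, hk⟩ = b := by
          simp [List.getElem_append, hleni]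
        rw [this, hci]
    have hne : ∃ x, NWExt (NWL wf i ++ [x]) := ⟨b, hmem⟩
    have := wf.not_lt_min {x | NWExt (NWL wf i ++ [x])} hmem
    rw [aNW_eq_min wf i hne] at hb
    exact this hb
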